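/- Consider the regularized Frank–Wolfe iteration for min_{X∈S_n} f(X) with f convex and β-smooth: given step size η = δ̂/(2β) with 0 < δ̂ ≤ δ, at iterate X_t set v_t = argmin_{‖v‖=1} ⟨vvᵀ, ∇f(X_t)⟩ + (ηβ/2)‖vvᵀ − X_t‖_F², and X_{t+1} = (1−η)X_t + η v_t v_tᵀ. If the eigen-gap assumption holds with gap δ > 0 at the optimum X*, then for all t ≥ 1, f(X_{t+1}) − f* ≤ (1 − δ̂/(4β))(f(X_t) − f*). -/

import Mathlib

open Matrix
open scoped RealInnerProductSpace

noncomputable section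

/-- Trace (Frobenius) inner product on real square matrices. -/
def tinner {n : ℕ} (A B : Matrix (Fin n) (Fin n) ℝ) : ℝ := ∑ i, ∑ j, A i j * B i j

/-- Squared Frobenius norm. -/
def frobSq {n : ℕ} (A : Matrix (Fin n) (Fin n) ℝ) : ℝ := ∑ i, ∑ j, (A i j)^2

/-- Frobenius norm. -/
def frobNorm {n : ℕ} (A : Matrix (Fin n) (Fin n) ℝ) : ℝ := Real.sqrt (frobSq A)

/-- The spectrahedron: positive semidefinite matrices with unit trace. -/
def Spectra (n : ℕ) : Set (Matrix (Fin n) (Fin n) ℝ) :=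
  {X | X.PosSemidef ∧ X.trace = 1}

/-- Eigenvalues of a symmetric matrix sorted in non-decreasing order, so that
`sortedEigs hA 0` is the smallest eigenvalue (λ_n in the paper's non-increasing
convention), `sortedEigs hA 1` is the second smallest (λ_{n-1}), and in general
`sortedEigs hA i = λ_{n-i}`. -/
def sortedEigs {n : ℕ} {A : Matrix (Fin n) (Fin n) ℝ} (hA : A.IsHermitian) : Fin n → ℝ :=
  hA.eigenvalues ∘ Tuple.sort hA.eigenvalues

namespace Stmt8Aux

variable {n : ℕ}

lemma tinner_comm (A B : Matrix (Fin n) (Fin n) ℝ) : tinner A B = tinner B A := by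
  simp [tinner, mul_comm]

lemma frobSq_eq (A : Matrix (Fin n) (Fin n) ℝ) : frobSq A = tinner A A := by
  simp [tinner, frobSq, sq]

lemma frobSq_nonneg (A : Matrix (Fin n) (Fin n) ℝ) : 0 ≤ frobSq A := by
  apply Finset.sum_nonneg; intro i _; apply Finset.sum_nonneg; intro j _; positivity

lemma tinner_sub_right (A B C : Matrix (Fin n) (Fin n) ℝ) :
    tinner A (B - C) = tinner A B - tinner A C := by
  simp [tinner, mul_sub, Finset.sum_sub_distrib]

lemma tinner_smul_right (c : ℝ) (A B : Matrix (Fin n) (Fin n) ℝ) :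
    tinner A (c • B) = c * tinner A B := by
  simp [tinner, Finset.mul_sum, mul_left_comm]

lemma frobSq_smul (c : ℝ) (A : Matrix (Fin n) (Fin n) ℝ) : frobSq (c • A) = c^2 * frobSq A := by
  simp [frobSq, Finset.mul_sum, mul_pow]

lemma frobSq_sub (A B : Matrix (Fin n) (Fin n) ℝ) :
    frobSq (A - B) = frobSq A - 2 * tinner A B + frobSq B := by
  simp only [frobSq, tinner, Matrix.sub_apply, Finset.mul_sum, ← Finset.sum_add_distrib,
    ← Finset.sum_sub_distrib]
  apply Finset.sum_congr rfl; intro i _; apply Finset.sum_congr rfl; intro j _; ring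

lemma tinner_vecMulVec_left (u : Fin n → ℝ) (B : Matrix (Fin n) (Fin n) ℝ) :
    tinner (vecMulVec u u) B = u ⬝ᵥ (B *ᵥ u) := by
  simp only [tinner, vecMulVec_apply, dotProduct, mulVec, dotProduct, Finset.mul_sum]
  apply Finset.sum_congr rfl; intro i _; apply Finset.sum_congr rfl; intro j _; ring

lemma resolution (b : OrthonormalBasis (Fin n) ℝ (EuclideanSpace ℝ (Fin n))) (j k : Fin n) :
    ∑ i, b i j * b i k = if j = k then 1 else 0 := by
  have h := b.sum_repr (EuclideanSpace.single k 1)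
  have h2 := congrFun (congrArg (fun x : EuclideanSpace ℝ (Fin n) => (x : Fin n → ℝ)) h) j
  have h3 : ∀ i : Fin n, b.repr (EuclideanSpace.single k (1:ℝ)) i = b i k := by
    intro i
    rw [b.repr_apply_apply, real_inner_comm, EuclideanSpace.inner_single_left]
    simp
  simp only [h3, EuclideanSpace.single_apply] at h2
  have h4 : (∑ x : Fin n, b x k • b x : EuclideanSpace ℝ (Fin n)) j
      = ∑ x : Fin n, b x k * b x j := by
    rw [WithLp.ofLp_sum]
    rw [Finset.sum_apply]
    simp
  rw [h4] at h2
  rw [Finset.sum_congr rfl fun i _ => mul_comm (b i j) (b i k)]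
  rw [show ∑ i : Fin n, b i k * b i j = if j = k then 1 else 0 from h2]

lemma trace_eq_sum (b : OrthonormalBasis (Fin n) ℝ (EuclideanSpace ℝ (Fin n)))
    (M : Matrix (Fin n) (Fin n) ℝ) :
    M.trace = ∑ i, (b i : Fin n → ℝ) ⬝ᵥ M *ᵥ (b i : Fin n → ℝ) := by
  have : ∀ i : Fin n, (b i : Fin n → ℝ) ⬝ᵥ M *ᵥ (b i : Fin n → ℝ)
      = ∑ j, ∑ k, M j k * (b i j * b i k) := by
    intro i
    simp only [dotProduct, mulVec, dotProduct, Finset.mul_sum]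
    exact Finset.sum_congr rfl fun j _ => Finset.sum_congr rfl fun k _ => by ring
  simp only [this]
  rw [Finset.sum_comm]
  have : ∀ j : Fin n, ∑ i, ∑ k, M j k * (b i j * b i k)
      = ∑ k, M j k * ∑ i, b i j * b i k := by
    intro j
    rw [Finset.sum_comm]
    exact Finset.sum_congr rfl fun k _ => by rw [Finset.mul_sum]
  simp only [this, resolution b]
  simp [Matrix.trace, Matrix.diag]

lemma herm_transpose {G : Matrix (Fin n) (Fin n) ℝ} (hG : G.IsHermitian) : Gᵀ = G := by
  ext i j
  have h2 := congrFun (congrFun hG.eq j) i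
  simpa [conjTranspose_apply] using h2.symm

lemma basis_unit {G : Matrix (Fin n) (Fin n) ℝ} (hG : G.IsHermitian) (i : Fin n) :
    ∑ j, ((hG.eigenvectorBasis i : Fin n → ℝ) j)^2 = 1 := by
  have h := hG.eigenvectorBasis.orthonormal
  rw [orthonormal_iff_ite] at h
  have := h i i
  simp only [if_pos rfl, PiLp.inner_apply] at this
  simpa [sq] using this

lemma tinner_trace (G X : Matrix (Fin n) (Fin n) ℝ) : tinner G X = (Gᵀ * X).trace := by
  simp only [Matrix.trace, Matrix.diag, Matrix.mul_apply, transpose_apply, tinner]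
  rw [Finset.sum_comm]

lemma mulVec_basis {G : Matrix (Fin n) (Fin n) ℝ} (hG : G.IsHermitian) (i : Fin n) :
    G *ᵥ (hG.eigenvectorBasis i : Fin n → ℝ)
      = hG.eigenvalues i • (hG.eigenvectorBasis i : Fin n → ℝ) :=
  hG.mulVec_eigenvectorBasis i

lemma eig_expansion {G : Matrix (Fin n) (Fin n) ℝ} (hG : G.IsHermitian)
    (X : Matrix (Fin n) (Fin n) ℝ) :
    tinner G X = ∑ i, hG.eigenvalues i *
      ((hG.eigenvectorBasis i : Fin n → ℝ) ⬝ᵥ X *ᵥ (hG.eigenvectorBasis i : Fin n → ℝ)) := by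
  rw [tinner_trace, herm_transpose hG, trace_eq_sum hG.eigenvectorBasis]
  apply Finset.sum_congr rfl
  intro i _
  rw [← Matrix.mulVec_mulVec, Matrix.dotProduct_mulVec, ← Matrix.mulVec_transpose,
    herm_transpose hG, mulVec_basis hG, smul_dotProduct]
  rfl

lemma eig_second {A : Matrix (Fin (n+2)) (Fin (n+2)) ℝ} (hA : A.IsHermitian)
    (i : Fin (n+2)) (hi : i ≠ Tuple.sort hA.eigenvalues 0) :
    sortedEigs hA 1 ≤ hA.eigenvalues i := by
  set σ := Tuple.sort hA.eigenvalues
  have h1 : hA.eigenvalues i = sortedEigs hA (σ.symm i) := by simp [sortedEigs, σ]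
  rw [h1]
  apply Tuple.monotone_sort
  have h2 : σ.symm i ≠ 0 := by
    intro h; apply hi; rw [← h]; simp
  rw [Fin.ne_iff_vne] at h2
  rw [Fin.le_def]
  simp only [Fin.val_one, Fin.val_zero] at h2 ⊢
  omega

lemma psd_nonneg {X : Matrix (Fin n) (Fin n) ℝ} (hX : X.PosSemidef) (x : Fin n → ℝ) :
    0 ≤ x ⬝ᵥ X *ᵥ x := by
  have := hX.dotProduct_mulVec_nonneg x
  simpa using this

lemma psd_symm {X : Matrix (Fin n) (Fin n) ℝ} (hX : X.PosSemidef) : Xᵀ = X :=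
  herm_transpose hX.1

lemma psd_diag_nonneg {X : Matrix (Fin n) (Fin n) ℝ} (hX : X.PosSemidef) (i : Fin n) :
    0 ≤ X i i := by
  have := psd_nonneg hX (Pi.single i 1)
  simpa [dotProduct, mulVec, Pi.single_apply, Finset.sum_ite_eq'] using this

lemma psd_entry_sq_le {X : Matrix (Fin n) (Fin n) ℝ} (hX : X.PosSemidef) (i j : Fin n) :
    (X i j)^2 ≤ X i i * X j j := by
  rcases eq_or_ne i j with rfl | hij
  · have h0 := psd_diag_nonneg hX i
    nlinarith
  · have key : ∀ a : ℝ, 0 ≤ X i i * (a * a) + (2 * X i j) * a + X j j := by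
      intro a
      have hq := psd_nonneg hX (fun k => a * (if k = i then 1 else 0) + (if k = j then 1 else 0))
      have hXji : X j i = X i j := by
        have := congrFun (congrFun (psd_symm hX) i) j
        simpa using this
      simp only [dotProduct, mulVec, mul_add, add_mul, Finset.mul_sum, mul_ite, ite_mul,
        mul_one, mul_zero, zero_mul, one_mul, Finset.sum_add_distrib,
        Finset.sum_ite_eq', Finset.mem_univ, if_true] at hq
      rw [hXji] at hq
      nlinarith [hq]
    have hd := discrim_le_zero key
    simp only [discrim] at hd
    nlinarith

lemma psd_smul {X : Matrix (Fin n) (Fin n) ℝ} (hX : X.PosSemidef) {c : ℝ} (hc : 0 ≤ c) :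
    (c • X).PosSemidef := by
  refine Matrix.PosSemidef.of_dotProduct_mulVec_nonneg ?_ ?_
  · rw [Matrix.IsHermitian, conjTranspose_smul]
    rw [hX.1.eq]
    simp
  · intro x
    have h1 : (c • X) *ᵥ x = c • (X *ᵥ x) := by
      rw [Matrix.smul_mulVec]
    rw [h1, dotProduct_smul]
    have := hX.dotProduct_mulVec_nonneg x
    simp only [star_trivial, smul_eq_mul] at this ⊢
    exact mul_nonneg hc this

lemma vmv_dot (u x : Fin n → ℝ) : x ⬝ᵥ (vecMulVec u u) *ᵥ x = (u ⬝ᵥ x)^2 := by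
  simp only [dotProduct, mulVec, vecMulVec_apply, dotProduct, sq, Finset.sum_mul,
    Finset.mul_sum]
  rw [Finset.sum_comm]
  apply Finset.sum_congr rfl; intro k _
  apply Finset.sum_congr rfl; intro l _
  ring

lemma vmv_mem_spectra (u : Fin n → ℝ) (hu : ∑ i, (u i)^2 = 1) :
    vecMulVec u u ∈ Spectra n := by
  constructor
  · refine Matrix.PosSemidef.of_dotProduct_mulVec_nonneg ?_ ?_
    · ext i j; simp [conjTranspose_apply, vecMulVec_apply, mul_comm]
    · intro x
      have := vmv_dot u x
      simp only [star_trivial]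
      rw [this]
      positivity
  · simp [Matrix.trace, Matrix.diag, vecMulVec_apply, ← sq, hu]

lemma frobSq_le_one {X : Matrix (Fin n) (Fin n) ℝ} (hX : X ∈ Spectra n) : frobSq X ≤ 1 := by
  have h1 : frobSq X ≤ ∑ i, ∑ j, X i i * X j j := by
    apply Finset.sum_le_sum; intro i _
    apply Finset.sum_le_sum; intro j _
    exact psd_entry_sq_le hX.1 i j
  have h2 : ∑ i, ∑ j, X i i * X j j = X.trace * X.trace := by
    rw [Matrix.trace, Finset.sum_mul_sum]
    rfl
  rw [h2, hX.2, mul_one] at h1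
  exact h1

lemma psd_mulvec_zero {X : Matrix (Fin n) (Fin n) ℝ} (hX : X.PosSemidef) (x : Fin n → ℝ)
    (h : x ⬝ᵥ X *ᵥ x = 0) : X *ᵥ x = 0 := by
  rw [← hX.dotProduct_mulVec_zero_iff]
  simpa using h

lemma deriv_le_of_slope {g : ℝ → ℝ} {d c : ℝ} (hd : HasDerivAt g d 0)
    (hs : ∀ t ∈ Set.Ioc (0:ℝ) 1, g t - g 0 ≤ t * c) : d ≤ c := by
  rw [hasDerivAt_iff_tendsto_slope] at hd
  have hd' : Filter.Tendsto (slope g 0) (nhdsWithin 0 (Set.Ioi 0)) (nhds d) :=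
    hd.mono_left (nhdsWithin_mono 0 (fun x hx => ne_of_gt hx))
  refine le_of_tendsto hd' ?_
  filter_upwards [Ioc_mem_nhdsGT_of_mem (Set.left_mem_Ico.mpr one_pos)] with t ht
  rw [slope_def_field, div_le_iff₀ (by linarith [ht.1] : (0:ℝ) < t - 0)]
  have := hs t ht
  nlinarith [ht.1]

lemma deriv_nonneg_of_min {g : ℝ → ℝ} {d : ℝ} (hd : HasDerivAt g d 0)
    (hs : ∀ t ∈ Set.Ioc (0:ℝ) 1, g 0 ≤ g t) : 0 ≤ d := by
  rw [hasDerivAt_iff_tendsto_slope] at hd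
  have hd' : Filter.Tendsto (slope g 0) (nhdsWithin 0 (Set.Ioi 0)) (nhds d) :=
    hd.mono_left (nhdsWithin_mono 0 (fun x hx => ne_of_gt hx))
  refine ge_of_tendsto hd' ?_
  filter_upwards [Ioc_mem_nhdsGT_of_mem (Set.left_mem_Ico.mpr one_pos)] with t ht
  rw [slope_def_field]
  apply div_nonneg
  · linarith [hs t ht]
  · linarith [ht.1]

end Stmt8Aux

open Stmt8Aux

/-- One step of regularized Frank–Wolfe with step `η = δ̂/(2β)`, `0 < δ̂ ≤ δ`,
contracts the optimality gap by a factor `1 − δ̂/(4β)`, under the eigen-gap assumption. -/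
theorem stmt8 {n : ℕ} (f : Matrix (Fin (n+2)) (Fin (n+2)) ℝ → ℝ)
    (Gf : Matrix (Fin (n+2)) (Fin (n+2)) ℝ → Matrix (Fin (n+2)) (Fin (n+2)) ℝ)
    (β : ℝ) (hβ : 0 < β)
    (hconv : ConvexOn ℝ Set.univ f)
    (hdiff : ∀ X H, HasDerivAt (fun t : ℝ => f (X + t • H)) (tinner (Gf X) H) 0)
    (hsmooth : ∀ X Y, f Y ≤ f X + tinner (Gf X) (Y - X) + β / 2 * frobSq (Y - X))
    (Xs : Matrix (Fin (n+2)) (Fin (n+2)) ℝ) (hXs : Xs ∈ Spectra (n+2))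
    (hopt : ∀ X ∈ Spectra (n+2), f Xs ≤ f X)
    (hG : (Gf Xs).IsHermitian)
    (δ : ℝ) (hδ : δ = sortedEigs hG 1 - sortedEigs hG 0) (hδpos : 0 < δ)
    (δh : ℝ) (hδh : 0 < δh) (hδhδ : δh ≤ δ)
    (η : ℝ) (hη : η = δh / (2 * β))
    (Xt : Matrix (Fin (n+2)) (Fin (n+2)) ℝ) (hXt : Xt ∈ Spectra (n+2))
    (v : Fin (n+2) → ℝ) (hv : ∑ i, (v i)^2 = 1)
    (hvmin : ∀ u : Fin (n+2) → ℝ, (∑ i, (u i)^2 = 1) →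
      tinner (vecMulVec v v) (Gf Xt) + η * β / 2 * frobSq (vecMulVec v v - Xt) ≤
      tinner (vecMulVec u u) (Gf Xt) + η * β / 2 * frobSq (vecMulVec u u - Xt)) :
    f ((1 - η) • Xt + η • vecMulVec v v) - f Xs ≤ (1 - δh / (4 * β)) * (f Xt - f Xs) := by
  classical
  obtain ⟨i0, hi0⟩ : ∃ i0 : Fin (n+2), i0 = Tuple.sort hG.eigenvalues 0 := ⟨_, rfl⟩
  obtain ⟨w, hwdef⟩ : ∃ w : Fin (n+2) → ℝ,
      w = (hG.eigenvectorBasis i0 : Fin (n+2) → ℝ) := ⟨_, rfl⟩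
  have hw1 : ∑ j, (w j)^2 = 1 := by rw [hwdef]; exact basis_unit hG i0
  have hwdot : w ⬝ᵥ w = 1 := by
    rw [dotProduct]
    simp only [← pow_two]
    exact hw1
  have hwm : vecMulVec w w ∈ Spectra (n+2) := vmv_mem_spectra w hw1
  have hGw : (Gf Xs) *ᵥ w = hG.eigenvalues i0 • w := by
    rw [hwdef]; exact mulVec_basis hG i0
  have hvi0 : hG.eigenvalues i0 = sortedEigs hG 0 := by rw [hi0]; rfl
  -- value of ⟨G, wwᵀ⟩
  have hGww : tinner (Gf Xs) (vecMulVec w w) = sortedEigs hG 0 := by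
    rw [tinner_comm, tinner_vecMulVec_left, hGw, dotProduct_smul, hwdot, hvi0]
    simp
  -- the eigen-gap lower bound on ⟨G, X⟩ for X in the spectrahedron
  have gap : ∀ X ∈ Spectra (n+2),
      sortedEigs hG 0 + δ * (1 - w ⬝ᵥ X *ᵥ w) ≤ tinner (Gf Xs) X := by
    intro X hX
    rw [eig_expansion hG X]
    have hp0 : ∀ i : Fin (n+2), 0 ≤ (hG.eigenvectorBasis i : Fin (n+2) → ℝ) ⬝ᵥ X *ᵥ
        (hG.eigenvectorBasis i : Fin (n+2) → ℝ) := fun i => psd_nonneg hX.1 _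
    have hpsum : ∑ i, (hG.eigenvectorBasis i : Fin (n+2) → ℝ) ⬝ᵥ X *ᵥ
        (hG.eigenvectorBasis i : Fin (n+2) → ℝ) = 1 := by
      rw [← trace_eq_sum hG.eigenvectorBasis X]; exact hX.2
    have hsplit : ∑ i, hG.eigenvalues i * ((hG.eigenvectorBasis i : Fin (n+2) → ℝ) ⬝ᵥ X *ᵥ
          (hG.eigenvectorBasis i : Fin (n+2) → ℝ))
        = hG.eigenvalues i0 * ((hG.eigenvectorBasis i0 : Fin (n+2) → ℝ) ⬝ᵥ X *ᵥ
          (hG.eigenvectorBasis i0 : Fin (n+2) → ℝ))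
          + ∑ i ∈ Finset.univ.erase i0, hG.eigenvalues i *
            ((hG.eigenvectorBasis i : Fin (n+2) → ℝ) ⬝ᵥ X *ᵥ
            (hG.eigenvectorBasis i : Fin (n+2) → ℝ)) :=
      (Finset.add_sum_erase _ _ (Finset.mem_univ i0)).symm
    have herase : ∑ i ∈ Finset.univ.erase i0, (hG.eigenvectorBasis i : Fin (n+2) → ℝ) ⬝ᵥ X *ᵥ
        (hG.eigenvectorBasis i : Fin (n+2) → ℝ)
        = 1 - (hG.eigenvectorBasis i0 : Fin (n+2) → ℝ) ⬝ᵥ X *ᵥ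
          (hG.eigenvectorBasis i0 : Fin (n+2) → ℝ) := by
      rw [Finset.sum_erase_eq_sub (Finset.mem_univ i0), hpsum]
    have hlower : ∑ i ∈ Finset.univ.erase i0, (sortedEigs hG 0 + δ) *
          ((hG.eigenvectorBasis i : Fin (n+2) → ℝ) ⬝ᵥ X *ᵥ
          (hG.eigenvectorBasis i : Fin (n+2) → ℝ))
        ≤ ∑ i ∈ Finset.univ.erase i0, hG.eigenvalues i *
            ((hG.eigenvectorBasis i : Fin (n+2) → ℝ) ⬝ᵥ X *ᵥ
            (hG.eigenvectorBasis i : Fin (n+2) → ℝ)) := by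
      apply Finset.sum_le_sum
      intro i hi
      have hine : i ≠ i0 := Finset.ne_of_mem_erase hi
      have h2 := eig_second hG i (by rw [← hi0]; exact hine)
      have : sortedEigs hG 0 + δ ≤ hG.eigenvalues i := by rw [hδ]; linarith
      exact mul_le_mul_of_nonneg_right this (hp0 i)
    rw [← Finset.mul_sum, herase] at hlower
    have hwp : w ⬝ᵥ X *ᵥ w = (hG.eigenvectorBasis i0 : Fin (n+2) → ℝ) ⬝ᵥ X *ᵥ
        (hG.eigenvectorBasis i0 : Fin (n+2) → ℝ) := by rw [hwdef]
    rw [hsplit, hwp, hvi0]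
    linarith [hlower]
  -- gradient inequality from convexity
  have hgrad : ∀ X Y : Matrix (Fin (n+2)) (Fin (n+2)) ℝ,
      tinner (Gf X) (Y - X) ≤ f Y - f X := by
    intro X Y
    apply deriv_le_of_slope (hdiff X (Y - X))
    intro t ht
    have key : X + t • (Y - X) = (1 - t) • X + t • Y := by module
    have key0 : X + (0:ℝ) • (Y - X) = X := by simp
    have hco := hconv.2 (Set.mem_univ X) (Set.mem_univ Y)
      (by linarith [ht.2] : (0:ℝ) ≤ 1 - t) (le_of_lt ht.1) (by ring)
    simp only [smul_eq_mul] at hco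
    simp only [key, key0]
    calc f ((1 - t) • X + t • Y) - f X ≤ (1 - t) * f X + t * f Y - f X := by linarith
    _ = t * (f Y - f X) := by ring
  -- first-order optimality at Xs
  have hfoc : 0 ≤ tinner (Gf Xs) (vecMulVec w w - Xs) := by
    apply deriv_nonneg_of_min (hdiff Xs (vecMulVec w w - Xs))
    intro t ht
    have key : Xs + t • (vecMulVec w w - Xs) = (1 - t) • Xs + t • vecMulVec w w := by module
    have key0 : Xs + (0:ℝ) • (vecMulVec w w - Xs) = Xs := by simp
    simp only [key, key0]
    apply hopt
    constructor
    · exact (psd_smul hXs.1 (by linarith [ht.2] : (0:ℝ) ≤ 1 - t)).add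
        (psd_smul hwm.1 (le_of_lt ht.1))
    · rw [trace_add, trace_smul, trace_smul, hXs.2, hwm.2]
      simp
  have hGXs_le : tinner (Gf Xs) Xs ≤ sortedEigs hG 0 := by
    rw [tinner_sub_right] at hfoc
    linarith [hGww]
  -- Xs has full weight on the bottom eigenvector
  have hq1 : w ⬝ᵥ Xs *ᵥ w = 1 := by
    have hpsum : ∑ i, (hG.eigenvectorBasis i : Fin (n+2) → ℝ) ⬝ᵥ Xs *ᵥ
        (hG.eigenvectorBasis i : Fin (n+2) → ℝ) = 1 := by
      rw [← trace_eq_sum hG.eigenvectorBasis Xs]; exact hXs.2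
    have hple : w ⬝ᵥ Xs *ᵥ w ≤ 1 := by
      rw [hwdef, ← hpsum]
      exact Finset.single_le_sum (f := fun i => (hG.eigenvectorBasis i : Fin (n+2) → ℝ) ⬝ᵥ Xs *ᵥ
          (hG.eigenvectorBasis i : Fin (n+2) → ℝ)) (fun i _ => psd_nonneg hXs.1 _) (Finset.mem_univ i0)
    refine le_antisymm hple ?_
    by_contra hc
    push_neg at hc
    have h1 := gap Xs hXs
    nlinarith [mul_pos hδpos (by linarith : (0:ℝ) < 1 - w ⬝ᵥ Xs *ᵥ w)]
  -- Xs is rank one: Xs = w wᵀ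
  have hXsww : Xs = vecMulVec w w := by
    have hpsum : ∑ i, (hG.eigenvectorBasis i : Fin (n+2) → ℝ) ⬝ᵥ Xs *ᵥ
        (hG.eigenvectorBasis i : Fin (n+2) → ℝ) = 1 := by
      rw [← trace_eq_sum hG.eigenvectorBasis Xs]; exact hXs.2
    have hpz : ∀ i, i ≠ i0 →
        (hG.eigenvectorBasis i : Fin (n+2) → ℝ) ⬝ᵥ Xs *ᵥ
          (hG.eigenvectorBasis i : Fin (n+2) → ℝ) = 0 := by
      intro i hi
      have herase : ∑ j ∈ Finset.univ.erase i0,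
          (hG.eigenvectorBasis j : Fin (n+2) → ℝ) ⬝ᵥ Xs *ᵥ
            (hG.eigenvectorBasis j : Fin (n+2) → ℝ) = 0 := by
        rw [Finset.sum_erase_eq_sub (Finset.mem_univ i0), hpsum]
        have hq1' : (hG.eigenvectorBasis i0 : Fin (n+2) → ℝ) ⬝ᵥ Xs *ᵥ
            (hG.eigenvectorBasis i0 : Fin (n+2) → ℝ) = 1 := by rw [← hwdef]; exact hq1
        rw [hq1']; ring
      have := (Finset.sum_eq_zero_iff_of_nonneg
        (fun j _ => psd_nonneg hXs.1 ((hG.eigenvectorBasis j : Fin (n+2) → ℝ)))).mp herase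
      exact this i (Finset.mem_erase.mpr ⟨hi, Finset.mem_univ i⟩)
    have hmz : ∀ i, i ≠ i0 → Xs *ᵥ (hG.eigenvectorBasis i : Fin (n+2) → ℝ) = 0 :=
      fun i hi => psd_mulvec_zero hXs.1 _ (hpz i hi)
    have hentry : ∀ j k, Xs j k = ∑ i, (hG.eigenvectorBasis i : Fin (n+2) → ℝ) j *
        (Xs *ᵥ (hG.eigenvectorBasis i : Fin (n+2) → ℝ)) k := by
      intro j k
      have e1 : Xs j k = ∑ j', (if j = j' then (1:ℝ) else 0) * Xs j' k := by simp
      rw [e1]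
      calc ∑ j', (if j = j' then (1:ℝ) else 0) * Xs j' k
          = ∑ j', (∑ i, (hG.eigenvectorBasis i : Fin (n+2) → ℝ) j *
              (hG.eigenvectorBasis i : Fin (n+2) → ℝ) j') * Xs j' k :=
            Finset.sum_congr rfl (fun j' _ => by
              rw [← resolution hG.eigenvectorBasis j j'])
        _ = ∑ j', ∑ i, (hG.eigenvectorBasis i : Fin (n+2) → ℝ) j *
              (hG.eigenvectorBasis i : Fin (n+2) → ℝ) j' * Xs j' k := by
            exact Finset.sum_congr rfl (fun j' _ => Finset.sum_mul _ _ _)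
        _ = ∑ i, ∑ j', (hG.eigenvectorBasis i : Fin (n+2) → ℝ) j *
              (hG.eigenvectorBasis i : Fin (n+2) → ℝ) j' * Xs j' k := Finset.sum_comm
        _ = ∑ i, (hG.eigenvectorBasis i : Fin (n+2) → ℝ) j *
              (Xs *ᵥ (hG.eigenvectorBasis i : Fin (n+2) → ℝ)) k := by
            refine Finset.sum_congr rfl (fun i _ => ?_)
            simp only [mulVec, dotProduct, Finset.mul_sum]
            refine Finset.sum_congr rfl (fun j' _ => ?_)
            have hsym := congrFun (congrFun (psd_symm hXs.1) j') k
            rw [transpose_apply] at hsym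
            rw [← hsym]; ring
    have hXy : ∀ j k, Xs j k = w j * (Xs *ᵥ w) k := by
      intro j k
      rw [hentry j k,
        Finset.sum_eq_single_of_mem i0 (Finset.mem_univ i0)
          (fun i _ hi => by rw [hmz i hi]; simp), hwdef]
    have h3sum : ∑ m, (Xs *ᵥ w) m * w m = 1 := by
      rw [Finset.sum_congr rfl fun m _ => mul_comm ((Xs *ᵥ w) m) (w m)]
      exact hq1
    have hy : ∀ k, (Xs *ᵥ w) k = w k := by
      intro k
      calc (Xs *ᵥ w) k = ∑ m, Xs k m * w m := rfl
        _ = ∑ m, w k * ((Xs *ᵥ w) m * w m) :=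
            Finset.sum_congr rfl (fun m _ => by rw [hXy k m]; ring)
        _ = w k * ∑ m, (Xs *ᵥ w) m * w m := by rw [Finset.mul_sum]
        _ = w k := by rw [h3sum, mul_one]
    ext j k
    rw [vecMulVec_apply, hXy j k, hy k]
  -- quadratic growth pieces for Xt
  have hh0 : 0 ≤ f Xt - f Xs := by linarith [hopt Xt hXt]
  have hq_le : δ * (1 - w ⬝ᵥ Xt *ᵥ w) ≤ f Xt - f Xs := by
    have h1 := gap Xt hXt
    have h2 := hgrad Xs Xt
    rw [tinner_sub_right] at h2
    have h3 : tinner (Gf Xs) Xs = sortedEigs hG 0 := by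
      rw [← hGww]; exact congrArg _ hXsww
    linarith
  have hF : frobSq (Xs - Xt) ≤ 2 * (1 - w ⬝ᵥ Xt *ᵥ w) := by
    rw [frobSq_sub]
    have h1 : frobSq Xs ≤ 1 := frobSq_le_one hXs
    have h2 : frobSq Xt ≤ 1 := frobSq_le_one hXt
    have h3 : tinner Xs Xt = w ⬝ᵥ Xt *ᵥ w := by rw [hXsww, tinner_vecMulVec_left]
    linarith
  have hF0 : 0 ≤ frobSq (Xs - Xt) := frobSq_nonneg _
  have hδF : δh * frobSq (Xs - Xt) ≤ 2 * (f Xt - f Xs) := by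
    have h1 : δh * frobSq (Xs - Xt) ≤ δ * frobSq (Xs - Xt) :=
      mul_le_mul_of_nonneg_right hδhδ hF0
    have h2 : δ * frobSq (Xs - Xt) ≤ δ * (2 * (1 - w ⬝ᵥ Xt *ᵥ w)) :=
      mul_le_mul_of_nonneg_left hF (le_of_lt hδpos)
    nlinarith [hq_le]
  -- the main step
  have hηpos : 0 < η := by rw [hη]; positivity
  have hstep : (1 - η) • Xt + η • vecMulVec v v = Xt + η • (vecMulVec v v - Xt) := by module
  have hsm := hsmooth Xt (Xt + η • (vecMulVec v v - Xt))
  rw [add_sub_cancel_left, tinner_smul_right, frobSq_smul] at hsm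
  have h2 := hvmin w hw1
  rw [← hXsww, tinner_comm (vecMulVec v v) (Gf Xt), tinner_comm Xs (Gf Xt)] at h2
  have hT : tinner (Gf Xt) (vecMulVec v v - Xt) + η * β / 2 * frobSq (vecMulVec v v - Xt)
      ≤ tinner (Gf Xt) (Xs - Xt) + η * β / 2 * frobSq (Xs - Xt) := by
    rw [tinner_sub_right, tinner_sub_right]
    linarith
  have h3 : tinner (Gf Xt) (Xs - Xt) ≤ f Xs - f Xt := hgrad Xt Xs
  rw [hstep]
  have hcoef : (1:ℝ) - δh / (4 * β) = 1 - η / 2 := by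
    rw [hη, div_div]
    congr 1
    congr 1
    ring
  rw [hcoef]
  have hfinal : f (Xt + η • (vecMulVec v v - Xt)) ≤ f Xt
      + η * tinner (Gf Xt) (Xs - Xt) + η * (η * β / 2 * frobSq (Xs - Xt)) := by
    calc f (Xt + η • (vecMulVec v v - Xt))
        ≤ f Xt + η * tinner (Gf Xt) (vecMulVec v v - Xt)
          + β / 2 * (η^2 * frobSq (vecMulVec v v - Xt)) := hsm
      _ = f Xt + η * (tinner (Gf Xt) (vecMulVec v v - Xt)
          + η * β / 2 * frobSq (vecMulVec v v - Xt)) := by ring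
      _ ≤ f Xt + η * (tinner (Gf Xt) (Xs - Xt) + η * β / 2 * frobSq (Xs - Xt)) := by
          have := mul_le_mul_of_nonneg_left hT (le_of_lt hηpos)
          linarith
      _ = f Xt + η * tinner (Gf Xt) (Xs - Xt) + η * (η * β / 2 * frobSq (Xs - Xt)) := by ring
  have hηβ : η * β = δh / 2 := by
    rw [hη]
    field_simp
  have hmid : η * β / 2 * frobSq (Xs - Xt) ≤ (f Xt - f Xs) / 2 := by
    rw [hηβ]
    linarith
  have hlast : η * (η * β / 2 * frobSq (Xs - Xt)) ≤ η / 2 * (f Xt - f Xs) := by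
    have := mul_le_mul_of_nonneg_left hmid (le_of_lt hηpos)
    linarith
  have h3' : η * tinner (Gf Xt) (Xs - Xt) ≤ η * (f Xs - f Xt) :=
    mul_le_mul_of_nonneg_left h3 (le_of_lt hηpos)
  nlinarith [hfinal, h3', hlast, hh0, hηpos]
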